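/- Let p ≥ 7 be a prime with p ≡ 3 (mod 4), and let S(p) = { ∑ of the set of distinct residues {x^4 + cx^2 mod p : x ∈ Z/pZ} : c ∈ Z/pZ }. Then S(p) = Z/pZ if −1 ∈ S(p), and S(p) = { x^2 mod p : x ∈ Z/pZ } if −1 ∉ S(p). -/

import Mathlib

open Finset

section SOS_aux
variable {p : ℕ} [Fact p.Prime]



private lemma zmod_sum_pow_aux (i : ℕ) (hi : i ≠ 0) :
    ∑ x : ZMod p, x ^ i = if (p - 1) ∣ i then -1 else 0 := by
  classical
  let φ : (ZMod p)ˣ ↪ ZMod p := ⟨fun x ↦ x, fun _ _ => Units.ext⟩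
  have huniv : univ.map φ = univ \ {0} := by
    ext x
    simp only [mem_map, mem_univ, Function.Embedding.coeFn_mk, true_and, mem_sdiff,
      mem_singleton, φ]; exact isUnit_iff_ne_zero
  calc
    ∑ x : ZMod p, x ^ i = ∑ x ∈ univ \ {(0 : ZMod p)}, x ^ i := by
      rw [← sum_sdiff ({0} : Finset (ZMod p)).subset_univ, sum_singleton, zero_pow hi, add_zero]
    _ = ∑ x : (ZMod p)ˣ, ((x : ZMod p) ^ i) := by simp [φ, ← huniv, univ.sum_map φ]; rfl
    _ = if (p - 1) ∣ i then -1 else 0 := by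
      rw [FiniteField.sum_pow_units (ZMod p) i, ZMod.card]

/-- sum over image via canonical representatives, for a 2:1-with-involution map. -/
private lemma sum_image_invol_aux (s : Finset (ZMod p)) (f σ : ZMod p → ZMod p) (h : ZMod p → ZMod p)
    (hσσ : ∀ a, σ (σ a) = a)
    (hfσ : ∀ a, f (σ a) = f a)
    (hfib : ∀ a ∈ s, ∀ b ∈ s, f a = f b → b = a ∨ b = σ a) :
    ∑ v ∈ s.image f, h v
      = ∑ a ∈ s.filter (fun a => σ a ∉ s ∨ a.val ≤ (σ a).val), h (f a) := by
  classical
  set P := s.filter (fun a => σ a ∉ s ∨ a.val ≤ (σ a).val) with hP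
  have hPs : P ⊆ s := filter_subset _ _
  have himg : s.image f = P.image f := by
    apply le_antisymm
    · intro v hv
      rcases mem_image.1 hv with ⟨a, ha, rfl⟩
      by_cases hc : σ a ∉ s ∨ a.val ≤ (σ a).val
      · exact mem_image.2 ⟨a, mem_filter.2 ⟨ha, hc⟩, rfl⟩
      · push_neg at hc
        obtain ⟨hs1, hs2⟩ := hc
        refine mem_image.2 ⟨σ a, mem_filter.2 ⟨hs1, Or.inr ?_⟩, hfσ a⟩
        rw [hσσ]; omega
    · exact image_subset_image hPs
  rw [himg]
  apply sum_image
  intro a ha b hb hab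
  have ha' := mem_filter.1 ha
  have hb' := mem_filter.1 hb
  rcases hfib a ha'.1 b hb'.1 hab with h1 | h1
  · exact h1.symm
  · subst h1
    have hσa : σ a ∈ s := hb'.1
    have h2 : a.val ≤ (σ a).val := ha'.2.resolve_left (by simpa using hσa)
    have h3 : (σ a).val ≤ a.val := by
      have := hb'.2.resolve_left (by rw [hσσ]; simpa using ha'.1)
      rwa [hσσ] at this
    have : a.val = (σ a).val := le_antisymm h2 h3
    exact ZMod.val_injective p this

/-- doubling identity for sums over the representative set. -/
private lemma two_mul_sum_filter_aux (s : Finset (ZMod p)) (σ : ZMod p → ZMod p)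
    (F : ZMod p → ZMod p)
    (hσσ : ∀ a, σ (σ a) = a)
    (hs : ∀ a ∈ s, σ a ∈ s)
    (hF : ∀ a ∈ s, F (σ a) = F a) :
    2 * ∑ a ∈ s.filter (fun a => a.val ≤ (σ a).val), F a
      = (∑ a ∈ s, F a) + ∑ a ∈ s.filter (fun a => σ a = a), F a := by
  classical
  have hval : ∀ a : ZMod p, a.val = (σ a).val ↔ σ a = a := by
    intro a
    constructor
    · intro h; exact ZMod.val_injective p h.symm
    · intro h; rw [h]
  have hsplit := sum_filter_add_sum_filter_not s (fun a => a.val ≤ (σ a).val) F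
  have himg : (s.filter (fun a => ¬ a.val ≤ (σ a).val)).image σ
      = s.filter (fun a => a.val < (σ a).val) := by
    ext b
    simp only [mem_image, mem_filter, not_le]
    constructor
    · rintro ⟨a, ⟨has, hlt⟩, rfl⟩
      exact ⟨hs a has, by rw [hσσ]; exact hlt⟩
    · rintro ⟨hbs, hlt⟩
      exact ⟨σ b, ⟨hs b hbs, by rwa [hσσ]⟩, hσσ b⟩
  have h1 : ∑ a ∈ s.filter (fun a => ¬ a.val ≤ (σ a).val), F a
      = ∑ a ∈ s.filter (fun a => a.val < (σ a).val), F a := by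
    rw [← himg, sum_image ?_]
    · exact (sum_congr rfl fun a ha => (hF a (mem_filter.1 ha).1).symm)
    · intro a _ b _ hab
      have := congrArg σ hab
      rwa [hσσ, hσσ] at this
  have h2 : ∑ a ∈ s.filter (fun a => a.val ≤ (σ a).val), F a
      = (∑ a ∈ s.filter (fun a => a.val < (σ a).val), F a)
        + ∑ a ∈ s.filter (fun a => σ a = a), F a := by
    have e1 : s.filter (fun a => a.val < (σ a).val)
        = s.filter (fun a => a.val ≤ (σ a).val ∧ ¬ σ a = a) := by
      ext a
      simp only [mem_filter, and_assoc]
      constructor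
      · rintro ⟨h1', h2'⟩
        exact ⟨h1', le_of_lt h2', fun h => by rw [← hval a] at h; omega⟩
      · rintro ⟨h1', h2', h3'⟩
        refine ⟨h1', lt_of_le_of_ne h2' fun h => h3' ((hval a).1 h)⟩
    have e2 : s.filter (fun a => σ a = a)
        = s.filter (fun a => a.val ≤ (σ a).val ∧ σ a = a) := by
      ext a
      simp only [mem_filter, and_assoc]
      exact ⟨fun ⟨h1', h2'⟩ => ⟨h1', by rw [h2'], h2'⟩, fun ⟨h1', _, h3'⟩ => ⟨h1', h3'⟩⟩
    rw [e1, e2, ← filter_filter, ← filter_filter]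
    rw [add_comm]
    exact (sum_filter_add_sum_filter_not _ (fun a => σ a = a) F).symm
  calc 2 * ∑ a ∈ s.filter (fun a => a.val ≤ (σ a).val), F a
      = (∑ a ∈ s.filter (fun a => a.val ≤ (σ a).val), F a)
        + ((∑ a ∈ s.filter (fun a => a.val < (σ a).val), F a)
          + ∑ a ∈ s.filter (fun a => σ a = a), F a) := by rw [← h2]; ring
    _ = (∑ a ∈ s, F a) + ∑ a ∈ s.filter (fun a => σ a = a), F a := by
        rw [← h1] at *
        rw [← add_assoc, hsplit]

private lemma nat_ne_zero_zmod (hp7 : 7 ≤ p) (n : ℕ) (hn : n ≠ 0) (hn7 : n < 7) :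
    (n : ZMod p) ≠ 0 := by
  intro h
  rw [ZMod.natCast_eq_zero_iff] at h
  have := Nat.le_of_dvd (Nat.pos_of_ne_zero hn) h
  omega

private lemma two_mul_sum_squares_aux (hp7 : 7 ≤ p) (h : ZMod p → ZMod p) :
    2 * ∑ t ∈ (univ : Finset (ZMod p)).image (fun x => x ^ 2), h t
      = (∑ x : ZMod p, h (x ^ 2)) + h 0 := by
  classical
  have h2 : (2 : ZMod p) ≠ 0 := by
    have := nat_ne_zero_zmod hp7 2 (by norm_num) (by norm_num)
    simpa using this
  rw [sum_image_invol_aux univ (fun x => x ^ 2) (fun x => -x) h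
      (fun a => neg_neg a) (fun a => by ring) ?fib]
  case fib =>
    intro a _ b _ hab
    have : (a - b) * (a + b) = 0 := by ring_nf; linear_combination hab
    rcases mul_eq_zero.1 this with h' | h'
    · left; linear_combination -h'
    · right; linear_combination h'
  have hfilt : (univ : Finset (ZMod p)).filter (fun a => -a ∉ univ ∨ a.val ≤ (-a).val)
      = univ.filter (fun a => a.val ≤ (-a).val) := by
    apply filter_congr; intro a _; simp
  rw [hfilt]
  rw [two_mul_sum_filter_aux univ (fun a => -a) (fun a => h (a ^ 2))
      (fun a => neg_neg a) (fun a _ => mem_univ _) (fun a _ => by show h ((-a) ^ 2) = h (a ^ 2); rw [neg_sq])]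
  congr 1
  have : (univ : Finset (ZMod p)).filter (fun a => -a = a) = {0} := by
    ext a
    simp only [mem_filter, mem_univ, true_and, mem_singleton]
    constructor
    · intro ha
      have : (2 : ZMod p) * a = 0 := by linear_combination -ha
      rcases mul_eq_zero.1 this with h' | h'
      · exact absurd h' h2
      · exact h'
    · rintro rfl; simp
  rw [this, sum_singleton]
  norm_num



private lemma eight_ne_zero_aux (hp7 : 7 ≤ p) : (8 : ZMod p) ≠ 0 := by
  intro h
  have h' : ((8 : ℕ) : ZMod p) = 0 := by norm_num at h ⊢; exact_mod_cast h
  rw [ZMod.natCast_eq_zero_iff] at h'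
  have hle := Nat.le_of_dvd (by norm_num) h'
  interval_cases p
  · omega
  · have : Nat.Prime 8 := Fact.out
    norm_num at this


private lemma value_sum_aux (hp7 : 7 ≤ p) (hp : p % 4 = 3) (c : ZMod p) :
    ((univ : Finset (ZMod p)).image (fun x => x ^ 4 + c * x ^ 2)).sum id
      = if -(c/2) ∈ (univ : Finset (ZMod p)).image (fun x : ZMod p => x ^ 2)
        then -7 * (c/8) ^ 2 else (c/8) ^ 2 := by
  classical
  have hprime : p.Prime := Fact.out
  set j := p / 4 with hjdef
  have hj : p = 4 * j + 3 := by omega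
  have hj1 : 1 ≤ j := by omega
  have h8 : (8 : ZMod p) ≠ 0 := eight_ne_zero_aux hp7
  have h2 : (2 : ZMod p) ≠ 0 := by
    intro h; apply h8; rw [show (8 : ZMod p) = 2 * 2 * 2 by norm_num, h]; ring
  set Q0 : Finset (ZMod p) := univ.image (fun x : ZMod p => x ^ 2) with hQ0
  set g : ZMod p → ZMod p := fun t => t ^ 2 + c * t with hg
  set σ : ZMod p → ZMod p := fun t => -c - t with hσ
  -- step 1 : rewrite the image
  have himg : (univ : Finset (ZMod p)).image (fun x => x ^ 4 + c * x ^ 2) = Q0.image g := by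
    rw [hQ0, image_image]
    congr 1
    funext x
    show x ^ 4 + c * x ^ 2 = (x ^ 2) ^ 2 + c * x ^ 2
    ring
  have hσσ : ∀ a : ZMod p, σ (σ a) = a := fun a => by show -c - (-c - a) = a; ring
  have hgσ : ∀ a : ZMod p, g (σ a) = g a := fun a => by simp [hσ, hg]; ring
  have hfib : ∀ a ∈ Q0, ∀ b ∈ Q0, g a = g b → b = a ∨ b = σ a := by
    intro a _ b _ hab
    have : (b - a) * (b + a + c) = 0 := by simp [hg] at hab; linear_combination -hab
    rcases mul_eq_zero.1 this with h' | h'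
    · left; linear_combination h'
    · right; simp [hσ]; linear_combination h'
  -- step 2
  have hstep2 : (Q0.image g).sum id
      = ∑ a ∈ Q0.filter (fun a => σ a ∉ Q0 ∨ a.val ≤ (σ a).val), g a :=
    sum_image_invol_aux Q0 g σ id hσσ hgσ hfib
  -- step 3 : split the filter
  set B : Finset (ZMod p) := Q0.filter (fun t => σ t ∈ Q0) with hB
  have hstep3 : ∑ a ∈ Q0.filter (fun a => σ a ∉ Q0 ∨ a.val ≤ (σ a).val), g a
      = (∑ a ∈ Q0.filter (fun a => σ a ∉ Q0), g a)
        + ∑ a ∈ B.filter (fun a => a.val ≤ (σ a).val), g a := by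
    rw [← sum_filter_add_sum_filter_not
      (Q0.filter (fun a => σ a ∉ Q0 ∨ a.val ≤ (σ a).val)) (fun a => σ a ∈ Q0) g]
    rw [add_comm]
    congr 1
    · rw [filter_filter]
      refine sum_congr ?_ (fun _ _ => rfl)
      apply filter_congr
      intro a _
      tauto
    · rw [hB, filter_filter, filter_filter]
      refine sum_congr ?_ (fun _ _ => rfl)
      apply filter_congr
      intro a _
      tauto
  -- step 4 : doubling on B
  have hBσ : ∀ a ∈ B, σ a ∈ B := by
    intro a ha
    rw [hB, mem_filter] at ha ⊢
    exact ⟨ha.2, by rw [hσσ]; exact ha.1⟩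
  have hstep4 : 2 * ∑ a ∈ B.filter (fun a => a.val ≤ (σ a).val), g a
      = (∑ a ∈ B, g a) + ∑ a ∈ B.filter (fun a => σ a = a), g a :=
    two_mul_sum_filter_aux B σ g hσσ hBσ (fun a _ => hgσ a)
  -- power sums
  have hpow4 : ∑ x : ZMod p, (x : ZMod p) ^ 4 = 0 := by
    rw [zmod_sum_pow_aux 4 (by norm_num), if_neg]
    intro hdvd
    have := Nat.le_of_dvd (by norm_num) hdvd
    omega
  have hpow2 : ∑ x : ZMod p, (x : ZMod p) ^ 2 = 0 := by
    rw [zmod_sum_pow_aux 2 (by norm_num), if_neg]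
    intro hdvd
    have := Nat.le_of_dvd (by norm_num) hdvd
    omega
  have hgsq0 : ∑ x : ZMod p, g (x ^ 2) = 0 := by
    have : ∀ x : ZMod p, g (x ^ 2) = x ^ 4 + c * x ^ 2 := fun x => by simp [hg]; ring
    rw [sum_congr rfl fun x _ => this x, sum_add_distrib, hpow4, ← mul_sum, hpow2]
    ring
  -- step 6 : sum over Q0 of g is zero
  have hQ0g : ∑ t ∈ Q0, g t = 0 := by
    have h := two_mul_sum_squares_aux hp7 g
    rw [hgsq0] at h
    have hg0 : g 0 = 0 := by simp [hg]
    rw [hg0, add_zero] at h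
    exact (mul_eq_zero.1 h).resolve_left h2
  -- step 5
  have hstep5 : ∑ a ∈ Q0.filter (fun a => σ a ∉ Q0), g a = (0 : ZMod p) - ∑ a ∈ B, g a := by
    rw [← hQ0g, ← sum_filter_add_sum_filter_not Q0 (fun a => σ a ∈ Q0) g, hB]
    ring
  -- membership helper
  have hmemQ : ∀ a : ZMod p, a ∈ Q0 ↔ ∃ y : ZMod p, y ^ 2 = a := by
    intro a
    simp [hQ0, mem_image]
  -- pointwise character identity
  have hpoint : ∀ x : ZMod p,
      2 * (if σ (x ^ 2) ∈ Q0 then g (x ^ 2) else 0)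
        = x ^ 2 * (x ^ 2 + c) - x ^ 2 * (x ^ 2 + c) ^ (2 * j + 2) := by
    intro x
    by_cases ha0 : σ (x ^ 2) = 0
    · have ha0' : -c - x ^ 2 = 0 := ha0
      have hx : x ^ 2 + c = 0 := by linear_combination -ha0'
      rw [if_pos (by rw [ha0]; exact (hmemQ 0).2 ⟨0, by ring⟩)]
      rw [show (x ^ 2 + c) ^ (2 * j + 2) = 0 from by rw [hx]; exact zero_pow (by omega), hx]
      simp only [hg]
      linear_combination (2 * x ^ 2) * hx
    · by_cases hmem : σ (x ^ 2) ∈ Q0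
      · obtain ⟨y, hy⟩ := (hmemQ _).1 hmem
        have hyne : y ≠ 0 := by rintro rfl; apply ha0; rw [← hy]; ring
        have hA : σ (x ^ 2) ^ (2 * j + 1) = 1 := by
          rw [← hy, ← pow_mul, show 2 * (2 * j + 1) = p - 1 by omega]
          exact ZMod.pow_card_sub_one_eq_one hyne
        have hxc : (x ^ 2 + c) ^ (2 * j + 1) = -1 := by
          rw [show (x ^ 2 + c) = -(σ (x ^ 2)) from by show _ = -(-c - x ^ 2); ring,
            Odd.neg_pow ⟨j, by ring⟩, hA]
        have hpow22 : (x ^ 2 + c) ^ (2 * j + 2) = -(x ^ 2 + c) := by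
          rw [show 2 * j + 2 = (2 * j + 1) + 1 by omega, pow_succ (x ^ 2 + c) (2 * j + 1), hxc]
          ring
        rw [if_pos hmem, hpow22]
        simp only [hg]
        ring
      · have hA : σ (x ^ 2) ^ (2 * j + 1) = -1 := by
          have hd := ZMod.pow_div_two_eq_neg_one_or_one p ha0
          rw [show p / 2 = 2 * j + 1 by omega] at hd
          rcases hd with h' | h'
          · exfalso
            apply hmem
            have hsq : IsSquare (σ (x ^ 2)) := by
              rw [ZMod.euler_criterion p ha0, show p / 2 = 2 * j + 1 by omega]
              exact h'
            obtain ⟨r, hr⟩ := hsq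
            exact (hmemQ _).2 ⟨r, by rw [hr]; ring⟩
          · exact h'
        have hxc : (x ^ 2 + c) ^ (2 * j + 1) = 1 := by
          rw [show (x ^ 2 + c) = -(σ (x ^ 2)) from by show _ = -(-c - x ^ 2); ring,
            Odd.neg_pow ⟨j, by ring⟩, hA]
          ring
        have hpow22 : (x ^ 2 + c) ^ (2 * j + 2) = x ^ 2 + c := by
          rw [show 2 * j + 2 = (2 * j + 1) + 1 by omega, pow_succ (x ^ 2 + c) (2 * j + 1), hxc]
          ring
        rw [if_neg hmem, hpow22]
        ring
  -- the binomial character sum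
  set U : ZMod p := ∑ x : ZMod p, x ^ 2 * (x ^ 2 + c) ^ (2 * j + 2) with hUdef
  have hterm : ∀ x : ZMod p, x ^ 2 * (x ^ 2 + c) ^ (2 * j + 2)
      = ∑ k ∈ range (2 * j + 2 + 1),
          x ^ (2 * k + 2) * (c ^ (2 * j + 2 - k) * ((2 * j + 2).choose k : ZMod p)) := by
    intro x
    rw [add_pow, mul_comm, sum_mul]
    apply sum_congr rfl
    intro k _
    rw [← pow_mul]
    ring
  have hUsum : U = ∑ k ∈ range (2 * j + 2 + 1),
      (if (p - 1) ∣ (2 * k + 2) then (-1 : ZMod p) else 0)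
        * (c ^ (2 * j + 2 - k) * ((2 * j + 2).choose k : ZMod p)) := by
    rw [hUdef, sum_congr rfl (fun x _ => hterm x), sum_comm]
    apply sum_congr rfl
    intro k _
    rw [← sum_mul, zmod_sum_pow_aux (2 * k + 2) (by omega)]
  have hUval : U = -(((2 * j + 2).choose (2 * j) : ZMod p) * c ^ 2) := by
    rw [hUsum, sum_eq_single (2 * j)]
    · have hdvd : (p - 1) ∣ (2 * (2 * j) + 2) := by
        rw [show p - 1 = 4 * j + 2 by omega]
        exact ⟨1, by ring⟩
      rw [if_pos hdvd, show 2 * j + 2 - 2 * j = 2 by omega]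
      ring
    · intro b hb hbne
      rw [if_neg, zero_mul]
      intro hdvd
      have hb' : b < 2 * j + 3 := mem_range.1 hb
      rcases hdvd with ⟨t, ht⟩
      rw [show p - 1 = 4 * j + 2 by omega] at ht
      have ht1 : t ≠ 0 := by rintro rfl; omega
      have ht2 : t < 2 := by
        by_contra hcon
        have : (4 * j + 2) * 2 ≤ (4 * j + 2) * t := Nat.mul_le_mul_left _ (by omega)
        omega
      have ht3 : t = 1 := by omega
      subst ht3
      omega
    · intro hnot
      exact absurd (mem_range.2 (by omega)) hnot
  have hchoose : (2 * j + 2).choose (2 * j) = (j + 1) * (2 * j + 1) := by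
    have h1 : (2 * j + 2).choose (2 * j) = (2 * j + 2).choose 2 := by
      have h := Nat.choose_symm (show 2 ≤ 2 * j + 2 by omega)
      rwa [show 2 * j + 2 - 2 = 2 * j by omega] at h
    rw [h1, Nat.choose_two_right, show (2 * j + 2) - 1 = 2 * j + 1 by omega,
      show (2 * j + 2) * (2 * j + 1) = ((j + 1) * (2 * j + 1)) * 2 by ring,
      Nat.mul_div_cancel _ (by norm_num)]
  have hp0 : (4 : ZMod p) * (j : ZMod p) + 3 = 0 := by
    have h0 : ((4 * j + 3 : ℕ) : ZMod p) = 0 := by rw [← hj]; exact ZMod.natCast_self p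
    push_cast at h0
    linear_combination h0
  have hC8 : (8 : ZMod p) * (((2 * j + 2).choose (2 * j) : ℕ) : ZMod p) = -1 := by
    rw [hchoose]
    push_cast
    linear_combination ((4 : ZMod p) * (j : ZMod p) + 3) * hp0
  have hU8 : (8 : ZMod p) * U = c ^ 2 := by
    rw [hUval]
    linear_combination (-(c ^ 2)) * hC8
  -- sum over B
  have eB : ∑ a ∈ B, g a = ∑ t ∈ Q0, if σ t ∈ Q0 then g t else 0 := by
    rw [hB, sum_filter]
  have eB2 : 2 * ∑ t ∈ Q0, (if σ t ∈ Q0 then g t else 0)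
      = (∑ x : ZMod p, (if σ (x ^ 2) ∈ Q0 then g (x ^ 2) else 0))
        + (if σ 0 ∈ Q0 then g 0 else 0) :=
    two_mul_sum_squares_aux hp7 (fun t => if σ t ∈ Q0 then g t else 0)
  have hzero0 : (if σ 0 ∈ Q0 then g 0 else 0) = (0 : ZMod p) := by
    split_ifs <;> simp [hg]
  have eB3 : 2 * (∑ x : ZMod p, (if σ (x ^ 2) ∈ Q0 then g (x ^ 2) else 0)) = 0 - U := by
    rw [mul_sum, sum_congr rfl (fun x _ => hpoint x), sum_sub_distrib]
    have hz : ∑ x : ZMod p, x ^ 2 * (x ^ 2 + c) = 0 := by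
      rw [← hgsq0]
      apply sum_congr rfl
      intro x _
      simp only [hg]
      ring
    rw [hz, hUdef]
  have e32 : (32 : ZMod p) * (∑ a ∈ B, g a) = -c ^ 2 := by
    have h4 : (4 : ZMod p) * (∑ a ∈ B, g a) = -U := by
      calc (4 : ZMod p) * (∑ a ∈ B, g a)
          = 2 * (2 * (∑ t ∈ Q0, if σ t ∈ Q0 then g t else 0)) := by rw [← eB]; ring
        _ = 2 * ((∑ x : ZMod p, (if σ (x ^ 2) ∈ Q0 then g (x ^ 2) else 0))
            + (if σ 0 ∈ Q0 then g 0 else 0)) := by rw [eB2]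
        _ = -U := by rw [hzero0, add_zero, eB3]; ring
    linear_combination 8 * h4 + (-1 : ZMod p) * hU8
  -- the fixed-point sum
  have hfixsum : ∑ a ∈ B.filter (fun a => σ a = a), g a
      = (if -(c/2) ∈ Q0 then g (-(c/2)) else 0) := by
    have hset : B.filter (fun a => σ a = a) = Q0.filter (fun t => t = -(c/2)) := by
      rw [hB, filter_filter]
      ext t
      simp only [mem_filter]
      constructor
      · rintro ⟨ht, _, hfixt⟩
        refine ⟨ht, ?_⟩
        have h' : -c - t = t := hfixt
        field_simp
        linear_combination -h'
      · rintro ⟨ht, rfl⟩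
        have h' : σ (-(c/2)) = -(c/2) := by
          show -c - (-(c/2)) = -(c/2)
          field_simp
          ring
        exact ⟨ht, by rw [h']; exact ht, h'⟩
    rw [hset, filter_eq']
    split_ifs with h'
    · rw [sum_singleton]
    · rw [sum_empty]
  -- final assembly
  have h64 : (64 : ZMod p) ≠ 0 := by
    rw [show (64 : ZMod p) = 8 * 8 by norm_num]
    exact mul_ne_zero h8 h8
  apply mul_left_cancel₀ h64
  rw [show ((univ : Finset (ZMod p)).image (fun x => x ^ 4 + c * x ^ 2)).sum id
      = (∑ a ∈ Q0.filter (fun a => σ a ∉ Q0), g a)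
        + ∑ a ∈ B.filter (fun a => a.val ≤ (σ a).val), g a from by rw [himg, hstep2, hstep3]]
  rw [hstep5]
  rw [hfixsum] at hstep4
  have hq1 : (64 : ZMod p) * ((c/8) ^ 2) = c ^ 2 := by
    field_simp
    ring
  have hq2 : (4 : ZMod p) * ((-(c/2)) ^ 2 + c * (-(c/2))) = -(c ^ 2) := by
    field_simp
    ring
  split_ifs with hc
  · rw [if_pos hc] at hstep4
    simp only [hg] at hstep4 ⊢
    linear_combination 32 * hstep4 - e32 + 8 * hq2 + 7 * hq1
  · rw [if_neg hc, add_zero] at hstep4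
    linear_combination 32 * hstep4 - e32 - hq1


end SOS_aux

theorem set_of_sums_three_mod_four (p : ℕ) [Fact p.Prime] (hp7 : 7 ≤ p) (hp : p % 4 = 3) :
    let S : Finset (ZMod p) := Finset.univ.image (fun c : ZMod p =>
      (Finset.univ.image (fun x : ZMod p => x ^ 4 + c * x ^ 2)).sum id)
    ((-1 : ZMod p) ∈ S → S = Finset.univ) ∧
    ((-1 : ZMod p) ∉ S → S = Finset.univ.image (fun x : ZMod p => x ^ 2)) := by
  intro S
  classical
  have h8 : (8 : ZMod p) ≠ 0 := eight_ne_zero_aux hp7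
  have h2 : (2 : ZMod p) ≠ 0 := by
    intro h; apply h8; rw [show (8 : ZMod p) = 2 * 2 * 2 by norm_num, h]; ring
  set Q : Finset (ZMod p) := univ.image (fun x : ZMod p => x ^ 2) with hQ
  have hQiff : ∀ a : ZMod p, a ∈ Q ↔ IsSquare a := by
    intro a
    simp only [hQ, mem_image, mem_univ, true_and, IsSquare]
    constructor
    · rintro ⟨y, rfl⟩; exact ⟨y, by ring⟩
    · rintro ⟨r, rfl⟩; exact ⟨r, by ring⟩
  have hneg1 : ¬ IsSquare (-1 : ZMod p) := by
    rw [ZMod.exists_sq_eq_neg_one_iff]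
    simp [hp]
  have hns2 : ∀ a b : ZMod p, a ≠ 0 → b ≠ 0 → ¬IsSquare a → ¬IsSquare b →
      IsSquare (a * b) := by
    intro a b ha hb hA hB
    have ea := (ZMod.pow_div_two_eq_neg_one_or_one p ha).resolve_left
      (fun h => hA ((ZMod.euler_criterion p ha).2 h))
    have eb := (ZMod.pow_div_two_eq_neg_one_or_one p hb).resolve_left
      (fun h => hB ((ZMod.euler_criterion p hb).2 h))
    refine (ZMod.euler_criterion p (mul_ne_zero ha hb)).2 ?_
    rw [mul_pow, ea, eb]
    ring
  have hone : (-1 : ZMod p) ≠ 0 := by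
    intro h
    apply h2
    linear_combination -2 * h
  have hsqneg1 : ∀ r s : ZMod p, r ≠ 0 → s * s = -(r * r) → False := by
    intro r s hr h
    apply hneg1
    refine ⟨s * r⁻¹, ?_⟩
    field_simp
    linear_combination -h
  have hxor : ∀ a : ZMod p, a ≠ 0 → ¬IsSquare a → IsSquare (-a) := by
    intro a ha hA
    have := hns2 (-1) a hone ha hneg1 hA
    rwa [neg_one_mul] at this
  have hxor2 : ∀ a : ZMod p, a ≠ 0 → IsSquare a → ¬IsSquare (-a) := by
    rintro a ha ⟨r, rfl⟩ ⟨s, hs⟩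
    have hr : r ≠ 0 := by rintro rfl; exact ha (by ring)
    exact hsqneg1 r s hr (by linear_combination -hs)
  have hSdef : S = univ.image (fun c : ZMod p =>
      (univ.image (fun x : ZMod p => x ^ 4 + c * x ^ 2)).sum id) := rfl
  have hSmem : ∀ v : ZMod p, v ∈ S ↔
      ∃ c : ZMod p, (if -(c/2) ∈ Q then -7 * (c/8) ^ 2 else (c/8) ^ 2) = v := by
    intro v
    rw [hSdef]
    simp only [mem_image, mem_univ, true_and]
    constructor
    · rintro ⟨c, hc⟩; exact ⟨c, by rw [← value_sum_aux hp7 hp c]; exact hc⟩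
    · rintro ⟨c, hc⟩; exact ⟨c, by rw [value_sum_aux hp7 hp c]; exact hc⟩
  -- arithmetic helpers
  have harith1 : ∀ d : ZMod p, (8 * d) / 8 = d := fun d => by
    rw [mul_comm]; exact mul_div_cancel_right₀ d h8
  have harith2 : ∀ d : ZMod p, (8 * d) / 2 = 4 * d := fun d => by
    rw [div_eq_iff h2]; ring
  have h4z : (4 : ZMod p) ≠ 0 := by
    intro h; apply h8
    rw [show (8 : ZMod p) = 4 * 2 by norm_num, h]; ring
  have E1 : ∀ d : ZMod p, d ^ 2 ∈ S := by
    intro d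
    by_cases hd : d = 0
    · refine (hSmem _).2 ⟨0, ?_⟩
      subst hd
      split_ifs <;> norm_num
    · have h4d : (4 : ZMod p) * d ≠ 0 := mul_ne_zero h4z hd
      by_cases h4 : -(4 * d) ∈ Q
      · refine (hSmem _).2 ⟨-(8 * d), ?_⟩
        have hc1 : (-(8 * d)) / 8 = -d := by rw [neg_div, harith1]
        have hc2 : -((-(8 * d)) / 2) = 4 * d := by rw [neg_div, harith2]; ring
        have hX : 4 * d ∉ Q := by
          intro hmem
          have := hxor2 (-(4 * d)) (neg_ne_zero.2 h4d) ((hQiff _).1 h4)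
          rw [neg_neg] at this
          exact this ((hQiff _).1 hmem)
        rw [hc2, hc1, if_neg hX]
        ring
      · refine (hSmem _).2 ⟨8 * d, ?_⟩
        rw [show -((8 * d) / 2) = -(4 * d) by rw [harith2], harith1, if_neg h4]
  have E2 : ∀ d : ZMod p, -7 * d ^ 2 ∈ S := by
    intro d
    by_cases hd : d = 0
    · refine (hSmem _).2 ⟨0, ?_⟩
      subst hd
      split_ifs <;> norm_num
    · have h4d : (4 : ZMod p) * d ≠ 0 := mul_ne_zero h4z hd
      by_cases h4 : -(4 * d) ∈ Q
      · refine (hSmem _).2 ⟨8 * d, ?_⟩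
        rw [show -((8 * d) / 2) = -(4 * d) by rw [harith2], harith1, if_pos h4]
      · refine (hSmem _).2 ⟨-(8 * d), ?_⟩
        have hc1 : (-(8 * d)) / 8 = -d := by rw [neg_div, harith1]
        have hc2 : -((-(8 * d)) / 2) = 4 * d := by rw [neg_div, harith2]; ring
        have hX : 4 * d ∈ Q := by
          rw [hQiff]
          have := hxor (-(4 * d)) (neg_ne_zero.2 h4d) (fun hsq => h4 ((hQiff _).2 hsq))
          rwa [neg_neg] at this
        rw [hc2, hc1, if_pos hX]
        ring
  have E3 : ∀ v ∈ S, ∃ d : ZMod p, v = d ^ 2 ∨ v = -7 * d ^ 2 := by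
    intro v hv
    obtain ⟨c, hc⟩ := (hSmem v).1 hv
    refine ⟨c / 8, ?_⟩
    by_cases hcond : -(c/2) ∈ Q
    · right; rw [if_pos hcond] at hc; exact hc.symm
    · left; rw [if_neg hcond] at hc; exact hc.symm
  constructor
  · -- case -1 ∈ S
    intro hm
    obtain ⟨d, hd | hd⟩ := E3 (-1) hm
    · exact absurd ⟨d, by rw [hd]; ring⟩ hneg1
    · have hd0 : d ≠ 0 := by
        rintro rfl
        rw [show -7 * (0:ZMod p) ^ 2 = 0 by ring] at hd
        exact hone hd
      have h7 : (7 : ZMod p) = (d⁻¹) * (d⁻¹) := by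
        field_simp
        linear_combination hd
      apply Finset.eq_univ_iff_forall.2
      intro v
      by_cases hv : IsSquare v
      · obtain ⟨r, hr⟩ := hv
        rw [hr, ← sq]
        exact E1 r
      · have hv0 : v ≠ 0 := by rintro rfl; exact hv ⟨0, by ring⟩
        obtain ⟨s, hs⟩ : IsSquare (-v) := hxor v hv0 hv
        have hd0' : d⁻¹ ≠ 0 := inv_ne_zero hd0
        have : v = -7 * (s * d) ^ 2 := by
          rw [show (7:ZMod p) = d⁻¹ * d⁻¹ from h7]
          field_simp
          linear_combination -hs
        rw [this]
        exact E2 (s * d)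
  · -- case -1 ∉ S
    intro hm
    apply le_antisymm
    · intro v hv
      obtain ⟨d, hd | hd⟩ := E3 v hv
      · exact (hQiff v).2 ⟨d, by rw [hd]; ring⟩
      · by_cases h7 : (7 : ZMod p) = 0
        · refine (hQiff v).2 ⟨0, ?_⟩
          rw [hd, h7]; ring
        · have h7ns : ¬ IsSquare (7 : ZMod p) := by
            rintro ⟨u, hu⟩
            apply hm
            have hu0 : u ≠ 0 := by rintro rfl; exact h7 (by rw [hu]; ring)
            have : (-1 : ZMod p) = -7 * (u⁻¹) ^ 2 := by
              rw [hu]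
              field_simp
            rw [this]
            exact E2 u⁻¹
          have h7sq : IsSquare (-7 : ZMod p) := by
            have := hns2 (-1) 7 hone h7 hneg1 h7ns
            rwa [neg_one_mul] at this
          obtain ⟨t, ht⟩ := h7sq
          refine (hQiff v).2 ⟨t * d, ?_⟩
          rw [hd, show (-7 : ZMod p) = t * t from ht]
          ring
    · intro v hv
      obtain ⟨x, -, hx⟩ := mem_image.1 hv
      rw [← hx]
      exact E1 x
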